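/- arXiv:2404.04406 — 4 statements merged into one kernel-verified Lean document; each statement's English description precedes it below -/
import Mathlib

section
/- Let R_1, R_2, … be independent, identically distributed real-valued random variables with E[R_1⁴] < ∞, and let Ψ_n = (1/n²)·∑_{i=1}^n ∑_{j=1}^n (R_i − R_j)². Then the centered and scaled sequence √n·(Ψ_n − 2·Var(R_1)) is bounded in probability: for every ε > 0 there exists M > 0 such that P(|√n·(Ψ_n − 2·Var(R_1))| > M) ≤ ε for all n ≥ 1. -/
open Finset Filter MeasureTheory ProbabilityTheory
open scoped ENNReal

lemma sum_sub_sq' (n : ℕ) (a : ℕ → ℝ) :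
    ∑ i ∈ range n, ∑ j ∈ range n, (a i - a j) ^ 2
      = 2 * n * (∑ i ∈ range n, a i ^ 2) - 2 * (∑ i ∈ range n, a i) ^ 2 := by
  have h1 : ∀ i, ∑ j ∈ range n, (a i - a j) ^ 2
      = (n : ℝ) * a i ^ 2 - 2 * a i * (∑ j ∈ range n, a j) + ∑ j ∈ range n, a j ^ 2 := by
    intro i
    calc ∑ j ∈ range n, (a i - a j) ^ 2
        = ∑ j ∈ range n, (a i ^ 2 - 2 * a i * a j + a j ^ 2) := by
          refine Finset.sum_congr rfl fun j _ => by ring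
      _ = _ := by
          rw [Finset.sum_add_distrib, Finset.sum_sub_distrib, Finset.sum_const, ← Finset.mul_sum]
          simp [nsmul_eq_mul]
  rw [Finset.sum_congr rfl fun i _ => h1 i, Finset.sum_add_distrib, Finset.sum_sub_distrib]
  have h2 : ∑ x ∈ range n, 2 * a x * (∑ j ∈ range n, a j) = 2 * (∑ j ∈ range n, a j) ^ 2 := by
    rw [← Finset.sum_mul, ← Finset.mul_sum]; ring
  have h3 : ∑ x ∈ range n, (n : ℝ) * a x ^ 2 = n * ∑ x ∈ range n, a x ^ 2 := by
    rw [Finset.mul_sum]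
  rw [h2, h3, Finset.sum_const, Finset.card_range, nsmul_eq_mul]
  ring

/-- For i.i.d. real random variables `R i` with finite fourth moment, the
centered and scaled pairwise objective `√n · (Ψ_n − 2·Var(R 0))` is bounded in probability. -/
theorem sqrt_n_mul_centered_pairwise_objective_bounded_in_probability
    {Ω : Type*} [MeasurableSpace Ω] (P : Measure Ω) [IsProbabilityMeasure P]
    (R : ℕ → Ω → ℝ)
    (hIndep : iIndepFun R P)
    (hIdent : ∀ i, IdentDistrib (R i) (R 0) P P)
    (hL4 : MemLp (R 0) 4 P) :
    ∀ ε : ℝ, 0 < ε → ∃ M : ℝ, 0 < M ∧ ∀ n : ℕ, 1 ≤ n →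
      P {ω | M <
          |Real.sqrt n *
            ((1 / (n : ℝ) ^ 2) *
                (∑ i ∈ range n, ∑ j ∈ range n, (R i ω - R j ω) ^ 2) -
              2 * variance (R 0) P)|}
        ≤ ENNReal.ofReal ε := by
  intro ε hε
  -- basic integrability facts
  have h4 : ∀ i, MemLp (R i) 4 P := fun i => ((hIdent i).memLp_iff).mpr hL4
  have h2 : ∀ i, MemLp (R i) 2 P :=
    fun i => (h4 i).mono_exponent (by norm_num)
  set X : ℕ → Ω → ℝ := fun i => (fun x : ℝ => x ^ 2) ∘ R i with hXdef
  have hXeq : ∀ i, X i = R i • R i := by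
    intro i; funext ω; simp [hXdef, pow_two, Pi.smul_apply, smul_eq_mul]
  have hX2 : ∀ i, MemLp (X i) 2 P := by
    intro i
    rw [hXeq i]
    have : ENNReal.HolderTriple 4 4 2 := ⟨by
      rw [show (4:ℝ≥0∞) = 2*2 by norm_num]
      rw [ENNReal.mul_inv (by norm_num) (by norm_num), ← two_mul,
        ← mul_assoc, ENNReal.mul_inv_cancel (by norm_num) (by norm_num), one_mul]⟩
    exact MemLp.smul (h4 i) (h4 i)
  have hIdX : ∀ i, IdentDistrib (X i) (X 0) P P :=
    fun i => (hIdent i).comp (measurable_id.pow_const 2)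
  have hIndepX : iIndepFun X P :=
    hIndep.comp _ (fun i => measurable_id.pow_const 2)
  set μR : ℝ := ∫ ω, R 0 ω ∂P with hμR
  set m2 : ℝ := ∫ ω, (R 0 ω) ^ 2 ∂P with hm2
  set v : ℝ := variance (R 0) P with hv
  set v2 : ℝ := variance (X 0) P with hv2
  have hvnn : 0 ≤ v := variance_nonneg _ _
  have hv2nn : 0 ≤ v2 := variance_nonneg _ _
  have hvar : v = m2 - μR ^ 2 := by
    rw [hv, variance_eq_sub (h2 0)]
    simp only [Pi.pow_apply]
    rfl
  -- the choice of M
  set M : ℝ := max 1 (max (108 * v2 / ε) (max (432 * v * (|μR| + 1) ^ 2 / ε) (18 * v / ε)))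
    with hMdef
  have hM1 : 1 ≤ M := le_max_left _ _
  have hM0 : 0 < M := lt_of_lt_of_le one_pos hM1
  refine ⟨M, hM0, ?_⟩
  intro n hn
  have hn1 : (1:ℝ) ≤ (n:ℝ) := by exact_mod_cast hn
  have hnpos : (0:ℝ) < n := lt_of_lt_of_le one_pos hn1
  set s : ℝ := Real.sqrt n with hs
  have hs2 : s ^ 2 = (n:ℝ) := Real.sq_sqrt (le_of_lt hnpos)
  have hs1 : 1 ≤ s := by
    rw [hs, show (1:ℝ) = Real.sqrt 1 by simp]
    exact Real.sqrt_le_sqrt hn1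
  have hspos : 0 < s := lt_of_lt_of_le one_pos hs1
  -- expectations and variances of sums
  have hEX : P[∑ i ∈ range n, X i] = n * m2 := by
    simp only [Finset.sum_apply]
    rw [integral_finset_sum _ (fun i _ => ((hX2 i).integrable one_le_two))]
    have : ∀ i ∈ range n, ∫ ω, X i ω ∂P = m2 := by
      intro i _
      have := (hIdX i).integral_eq
      rw [this, hm2]
      rfl
    rw [Finset.sum_congr rfl this, Finset.sum_const, Finset.card_range, nsmul_eq_mul]
  have hEY : P[∑ i ∈ range n, R i] = n * μR := by
    simp only [Finset.sum_apply]
    rw [integral_finset_sum _ (fun i _ => ((h2 i).integrable one_le_two))]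
    have : ∀ i ∈ range n, ∫ ω, R i ω ∂P = μR := by
      intro i _
      rw [(hIdent i).integral_eq, hμR]
    rw [Finset.sum_congr rfl this, Finset.sum_const, Finset.card_range, nsmul_eq_mul]
  have hVX : variance (∑ i ∈ range n, X i) P = n * v2 := by
    rw [IndepFun.variance_sum (fun i _ => hX2 i)
      (fun i _ j _ hij => hIndepX.indepFun hij)]
    have : ∀ i ∈ range n, variance (X i) P = v2 := by
      intro i _
      rw [(hIdX i).variance_eq, hv2]
    rw [Finset.sum_congr rfl this, Finset.sum_const, Finset.card_range, nsmul_eq_mul]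
  have hVY : variance (∑ i ∈ range n, R i) P = n * v := by
    rw [IndepFun.variance_sum (fun i _ => h2 i)
      (fun i _ j _ hij => hIndep.indepFun hij)]
    have : ∀ i ∈ range n, variance (R i) P = v := by
      intro i _
      rw [(hIdent i).variance_eq, hv]
    rw [Finset.sum_congr rfl this, Finset.sum_const, Finset.card_range, nsmul_eq_mul]
  -- three Chebyshev bounds
  have hcA : (0:ℝ) < M * s / 6 := by positivity
  have hcB : (0:ℝ) < M * s / (12 * (|μR| + 1)) := by positivity
  have hcCsq : (0:ℝ) < M * s ^ 3 / 6 := by positivity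
  have hcC : (0:ℝ) < Real.sqrt (M * s ^ 3 / 6) := Real.sqrt_pos.mpr hcCsq
  have chebA := meas_ge_le_variance_div_sq (μ := P)
    (memLp_finsetSum' _ (fun i (_ : i ∈ range n) => hX2 i)) hcA
  have chebB := meas_ge_le_variance_div_sq (μ := P)
    (memLp_finsetSum' _ (fun i (_ : i ∈ range n) => h2 i)) hcB
  have chebC := meas_ge_le_variance_div_sq (μ := P)
    (memLp_finsetSum' _ (fun i (_ : i ∈ range n) => h2 i)) hcC
  rw [hEX, hVX] at chebA
  rw [hEY, hVY] at chebB
  rw [hEY, hVY] at chebC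
  -- numeric simplification of the Chebyshev bounds
  have hbA : (n:ℝ) * v2 / (M * s / 6) ^ 2 = 36 * v2 / M ^ 2 := by
    rw [← hs2]; field_simp; ring
  have hbB : (n:ℝ) * v / (M * s / (12 * (|μR| + 1))) ^ 2
      = 144 * v * (|μR| + 1) ^ 2 / M ^ 2 := by
    have : |μR| + 1 ≠ 0 := by positivity
    rw [← hs2]; field_simp; ring
  have hbC : (n:ℝ) * v / (Real.sqrt (M * s ^ 3 / 6)) ^ 2 = 6 * v / (M * s) := by
    rw [Real.sq_sqrt (le_of_lt hcCsq), ← hs2]; field_simp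
  rw [hbA] at chebA
  rw [hbB] at chebB
  rw [hbC] at chebC
  -- each bound is at most ε/3
  have hMa : 108 * v2 / ε ≤ M := le_trans (le_max_left _ _) (le_max_right _ _)
  have hMb : 432 * v * (|μR| + 1) ^ 2 / ε ≤ M :=
    le_trans (le_trans (le_max_left _ _) (le_max_right _ _)) (le_max_right _ _)
  have hMc : 18 * v / ε ≤ M :=
    le_trans (le_trans (le_max_right _ _) (le_max_right _ _)) (le_max_right _ _)
  have hMa' : 108 * v2 ≤ ε * M := by
    rw [div_le_iff₀ hε] at hMa; linarith
  have hMb' : 432 * v * (|μR| + 1) ^ 2 ≤ ε * M := by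
    rw [div_le_iff₀ hε] at hMb; linarith
  have hMc' : 18 * v ≤ ε * M := by
    rw [div_le_iff₀ hε] at hMc; linarith
  have hMM : ε * M ≤ ε * M ^ 2 := by
    refine mul_le_mul_of_nonneg_left ?_ hε.le
    calc M = M ^ 1 := (pow_one M).symm
      _ ≤ M ^ 2 := pow_le_pow_right₀ hM1 one_le_two
  have hMs : ε * M ≤ ε * (M * s) := by
    exact mul_le_mul_of_nonneg_left (le_mul_of_one_le_right hM0.le hs1) hε.le
  have hεA : 36 * v2 / M ^ 2 ≤ ε / 3 := by
    rw [div_le_div_iff₀ (by positivity) (by norm_num)]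
    linarith
  have hεB : 144 * v * (|μR| + 1) ^ 2 / M ^ 2 ≤ ε / 3 := by
    rw [div_le_div_iff₀ (by positivity) (by norm_num)]
    linarith
  have hεC : 6 * v / (M * s) ≤ ε / 3 := by
    rw [div_le_div_iff₀ (by positivity) (by norm_num)]
    linarith
  have hs0 : s ≠ 0 := hspos.ne'
  -- the set inclusion
  have hsub : {ω | M <
        |s * (1 / (n : ℝ) ^ 2 *
              (∑ i ∈ range n, ∑ j ∈ range n, (R i ω - R j ω) ^ 2) -
            2 * v)|}
      ⊆ {ω | M * s / 6 ≤ |(∑ i ∈ range n, X i) ω - ↑n * m2|}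
        ∪ ({ω | M * s / (12 * (|μR| + 1)) ≤ |(∑ i ∈ range n, R i) ω - ↑n * μR|}
          ∪ {ω | Real.sqrt (M * s ^ 3 / 6) ≤ |(∑ i ∈ range n, R i) ω - ↑n * μR|}) := by
    intro ω hω
    simp only [Set.mem_setOf_eq] at hω
    have hd : ∑ i ∈ range n, ∑ j ∈ range n, (R i ω - R j ω) ^ 2
        = 2 * n * (∑ i ∈ range n, (R i ω) ^ 2) - 2 * (∑ i ∈ range n, R i ω) ^ 2 :=
      sum_sub_sq' n (fun i => R i ω)
    have key : s * (1 / (n : ℝ) ^ 2 *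
          (2 * n * (∑ i ∈ range n, (R i ω) ^ 2) - 2 * (∑ i ∈ range n, R i ω) ^ 2) - 2 * v)
        = (2 / s) * ((∑ i ∈ range n, (R i ω) ^ 2) - n * m2)
          + (-(4 * μR / s)) * ((∑ i ∈ range n, R i ω) - n * μR)
          + (-(2 / s ^ 3)) * ((∑ i ∈ range n, R i ω) - n * μR) ^ 2 := by
      rw [hvar, ← hs2]
      field_simp
      ring
    rw [hd, key] at hω
    by_contra hcon
    simp only [Set.mem_union, Set.mem_setOf_eq, not_or, not_le] at hcon
    obtain ⟨hA, hB, hC⟩ := hcon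
    have hA' : |(∑ i ∈ range n, (R i ω) ^ 2) - ↑n * m2| < M * s / 6 := by
      simpa [hXdef] using hA
    have hB' : |(∑ i ∈ range n, R i ω) - ↑n * μR| < M * s / (12 * (|μR| + 1)) := by
      simpa using hB
    have hC' : |(∑ i ∈ range n, R i ω) - ↑n * μR| < Real.sqrt (M * s ^ 3 / 6) := by
      simpa using hC
    set Q : ℝ := ∑ i ∈ range n, (R i ω) ^ 2
    set S0 : ℝ := ∑ i ∈ range n, R i ω
    have ha : |(2 / s) * (Q - n * m2)| < M / 3 := by
      rw [abs_mul, abs_of_pos (by positivity : (0:ℝ) < 2 / s)]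
      calc (2 / s) * |Q - ↑n * m2| < (2 / s) * (M * s / 6) :=
            mul_lt_mul_of_pos_left hA' (by positivity)
        _ = M / 3 := by field_simp; ring
    have hb : |(-(4 * μR / s)) * (S0 - n * μR)| < M / 3 := by
      rw [abs_mul]
      have h1 : |(-(4 * μR / s))| ≤ 4 * (|μR| + 1) / s := by
        rw [abs_neg, abs_div, abs_of_pos hspos, abs_mul]
        have : |(4:ℝ)| = 4 := by norm_num
        rw [this]
        gcongr
        linarith
      calc |(-(4 * μR / s))| * |S0 - ↑n * μR|
          ≤ (4 * (|μR| + 1) / s) * |S0 - ↑n * μR| :=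
            mul_le_mul_of_nonneg_right h1 (abs_nonneg _)
        _ < (4 * (|μR| + 1) / s) * (M * s / (12 * (|μR| + 1))) :=
            mul_lt_mul_of_pos_left hB' (by positivity)
        _ = M / 3 := by
            have : |μR| + 1 ≠ 0 := by positivity
            field_simp
            ring
    have hc : |(-(2 / s ^ 3)) * (S0 - n * μR) ^ 2| < M / 3 := by
      rw [abs_mul, abs_neg, abs_of_pos (by positivity : (0:ℝ) < 2 / s ^ 3), abs_of_nonneg (sq_nonneg _)]
      have hsq : (S0 - ↑n * μR) ^ 2 < M * s ^ 3 / 6 := by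
        have := pow_lt_pow_left₀ hC' (abs_nonneg _) two_ne_zero
        rwa [sq_abs, Real.sq_sqrt hcCsq.le] at this
      calc (2 / s ^ 3) * (S0 - ↑n * μR) ^ 2 < (2 / s ^ 3) * (M * s ^ 3 / 6) :=
            mul_lt_mul_of_pos_left hsq (by positivity)
        _ = M / 3 := by field_simp; ring
    have habs := abs_add_le ((2 / s) * (Q - n * m2) + (-(4 * μR / s)) * (S0 - n * μR))
      ((-(2 / s ^ 3)) * (S0 - n * μR) ^ 2)
    have habs2 := abs_add_le ((2 / s) * (Q - n * m2)) ((-(4 * μR / s)) * (S0 - n * μR))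
    linarith
  calc P {ω | M <
        |s * (1 / (n : ℝ) ^ 2 *
              (∑ i ∈ range n, ∑ j ∈ range n, (R i ω - R j ω) ^ 2) -
            2 * v)|}
      ≤ P ({ω | M * s / 6 ≤ |(∑ i ∈ range n, X i) ω - ↑n * m2|}
        ∪ ({ω | M * s / (12 * (|μR| + 1)) ≤ |(∑ i ∈ range n, R i) ω - ↑n * μR|}
          ∪ {ω | Real.sqrt (M * s ^ 3 / 6) ≤ |(∑ i ∈ range n, R i) ω - ↑n * μR|})) :=
        measure_mono hsub
    _ ≤ P {ω | M * s / 6 ≤ |(∑ i ∈ range n, X i) ω - ↑n * m2|}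
        + P ({ω | M * s / (12 * (|μR| + 1)) ≤ |(∑ i ∈ range n, R i) ω - ↑n * μR|}
          ∪ {ω | Real.sqrt (M * s ^ 3 / 6) ≤ |(∑ i ∈ range n, R i) ω - ↑n * μR|}) :=
        measure_union_le _ _
    _ ≤ P {ω | M * s / 6 ≤ |(∑ i ∈ range n, X i) ω - ↑n * m2|}
        + (P {ω | M * s / (12 * (|μR| + 1)) ≤ |(∑ i ∈ range n, R i) ω - ↑n * μR|}
          + P {ω | Real.sqrt (M * s ^ 3 / 6) ≤ |(∑ i ∈ range n, R i) ω - ↑n * μR|}) :=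
        add_le_add_right (measure_union_le _ _) _
    _ ≤ ENNReal.ofReal (36 * v2 / M ^ 2)
        + (ENNReal.ofReal (144 * v * (|μR| + 1) ^ 2 / M ^ 2) + ENNReal.ofReal (6 * v / (M * s))) :=
        add_le_add chebA (add_le_add chebB chebC)
    _ ≤ ENNReal.ofReal (ε / 3) + (ENNReal.ofReal (ε / 3) + ENNReal.ofReal (ε / 3)) :=
        add_le_add (ENNReal.ofReal_le_ofReal hεA)
          (add_le_add (ENNReal.ofReal_le_ofReal hεB) (ENNReal.ofReal_le_ofReal hεC))
    _ = ENNReal.ofReal ε := by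
        rw [← ENNReal.ofReal_add (by positivity) (by positivity),
          ← ENNReal.ofReal_add (by positivity) (by positivity)]
        rw [show ε / 3 + (ε / 3 + ε / 3) = ε by ring]
end

section
/- Let (Ω, F, P) be a probability space, let f_n : Ω × [0, 1] → ℝ (n ≥ 1) be jointly measurable random functions that are continuous in θ for P-almost every ω, and let f : [0, 1] → ℝ be continuous with a unique minimizer θ₀ ∈ [0, 1] (i.e., f(θ₀) < f(θ) for all θ ≠ θ₀). Suppose sup_{θ ∈ [0,1]} |f_n(·, θ) − f(θ)| → 0 in probability, and let θ_n : Ω → [0, 1] be measurable maps satisfying f_n(ω, θ_n(ω)) = min_{θ ∈ [0,1]} f_n(ω, θ) for P-almost every ω. Then θ_n → θ₀ in probability. -/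
open Filter MeasureTheory

/-- (Consistency of extremum estimators.) If the random functions
`f n : Ω × [0,1] → ℝ` are jointly measurable and a.s. continuous in `θ`, `g : [0,1] → ℝ`
is continuous with unique minimizer `θ₀` on `[0,1]`,
`sup_{θ ∈ [0,1]} |f n (·, θ) − g θ| → 0` in probability, and `θn n` are measurable
a.s.-minimizers of `f n (ω, ·)` over `[0,1]`, then `θn n → θ₀` in probability. -/
theorem argmin_tendsto_of_uniform_convergence_in_probability
    {Ω : Type*} [MeasurableSpace Ω] (P : Measure Ω) [IsProbabilityMeasure P]
    (f : ℕ → Ω → ℝ → ℝ)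
    (hmeas : ∀ n, Measurable fun p : Ω × Set.Icc (0 : ℝ) 1 => f n p.1 p.2)
    (hcont : ∀ᵐ ω ∂P, ∀ n, ContinuousOn (f n ω) (Set.Icc (0 : ℝ) 1))
    (g : ℝ → ℝ) (hgcont : ContinuousOn g (Set.Icc (0 : ℝ) 1))
    (θ₀ : ℝ) (hθ₀mem : θ₀ ∈ Set.Icc (0 : ℝ) 1)
    (hθ₀min : ∀ θ ∈ Set.Icc (0 : ℝ) 1, θ ≠ θ₀ → g θ₀ < g θ)
    (hunif : ∀ ε : ℝ, 0 < ε →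
      Tendsto (fun n => P {ω | ε < ⨆ θ : Set.Icc (0 : ℝ) 1, |f n ω θ - g θ|})
        atTop (nhds 0))
    (θn : ℕ → Ω → ℝ) (hθnmeas : ∀ n, Measurable (θn n))
    (hθnmem : ∀ n, ∀ ω, θn n ω ∈ Set.Icc (0 : ℝ) 1)
    (hθnmin : ∀ n, ∀ᵐ ω ∂P,
      f n ω (θn n ω) = sInf (Set.image (f n ω) (Set.Icc (0 : ℝ) 1)) ∧
        ∀ θ ∈ Set.Icc (0 : ℝ) 1, f n ω (θn n ω) ≤ f n ω θ) :
    ∀ ε : ℝ, 0 < ε →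
      Tendsto (fun n => P {ω | ε < |θn n ω - θ₀|}) atTop (nhds 0) := by
  intro ε hε
  by_cases hK : (Set.Icc (0 : ℝ) 1 ∩ {θ | ε ≤ |θ - θ₀|}).Nonempty
  · set K := Set.Icc (0 : ℝ) 1 ∩ {θ | ε ≤ |θ - θ₀|} with hKdef
    have hKcl : IsClosed {θ : ℝ | ε ≤ |θ - θ₀|} :=
      isClosed_le continuous_const ((continuous_id.sub continuous_const).abs)
    have hKcomp : IsCompact K := isCompact_Icc.inter_right hKcl
    obtain ⟨θ₁, hθ₁K, hθ₁min⟩ :=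
      hKcomp.exists_isMinOn hK (hgcont.mono Set.inter_subset_left)
    have hθ₁ne : θ₁ ≠ θ₀ := by
      intro h
      have h2 : ε ≤ |θ₁ - θ₀| := hθ₁K.2
      rw [h, sub_self, abs_zero] at h2
      linarith
    have hm : g θ₀ < g θ₁ := hθ₀min θ₁ hθ₁K.1 hθ₁ne
    set δ : ℝ := (g θ₁ - g θ₀) / 4 with hδdef
    have hδpos : 0 < δ := by rw [hδdef]; linarith
    have key : ∀ n, P {ω | ε < |θn n ω - θ₀|} ≤
        P {ω | δ < ⨆ θ : Set.Icc (0 : ℝ) 1, |f n ω θ - g θ|} := by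
      intro n
      apply measure_mono_ae
      filter_upwards [hcont, hθnmin n] with ω hc hmin hω
      show δ < ⨆ θ : Set.Icc (0 : ℝ) 1, |f n ω θ - g θ|
      have hcn := hc n
      have hcg : ContinuousOn (fun θ => |f n ω θ - g θ|) (Set.Icc (0 : ℝ) 1) :=
        (hcn.sub hgcont).abs
      have hbdd : BddAbove (Set.range fun θ : Set.Icc (0 : ℝ) 1 => |f n ω θ - g θ|) := by
        rw [show (fun θ : Set.Icc (0 : ℝ) 1 => |f n ω θ - g θ|)
            = (Set.Icc (0 : ℝ) 1).domRestrict (fun θ => |f n ω θ - g θ|) from rfl,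
          Set.range_restrict]
        exact (isCompact_Icc.image_of_continuousOn hcg).bddAbove
      have hle : ∀ θ : Set.Icc (0 : ℝ) 1,
          |f n ω θ - g θ| ≤ ⨆ θ : Set.Icc (0 : ℝ) 1, |f n ω θ - g θ| :=
        fun θ => le_ciSup hbdd θ
      have h1 : θn n ω ∈ K := ⟨hθnmem n ω, (le_of_lt hω : ε ≤ |θn n ω - θ₀|)⟩
      have h2 : g θ₁ ≤ g (θn n ω) := isMinOn_iff.mp hθ₁min (θn n ω) h1
      have h3 : f n ω (θn n ω) ≤ f n ω θ₀ := hmin.2 θ₀ hθ₀mem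
      have h4 := abs_le.mp (hle ⟨θn n ω, hθnmem n ω⟩)
      have h5 := abs_le.mp (hle ⟨θ₀, hθ₀mem⟩)
      simp only at h4 h5
      linarith [h4.1, h4.2, h5.1, h5.2, hδdef]
    exact tendsto_of_tendsto_of_tendsto_of_le_of_le tendsto_const_nhds
      (hunif δ hδpos) (fun n => zero_le) key
  · have hz : ∀ n, P {ω | ε < |θn n ω - θ₀|} = 0 := by
      intro n
      have : {ω | ε < |θn n ω - θ₀|} = ∅ := by
        rw [Set.eq_empty_iff_forall_notMem]
        intro ω hω
        exact hK ⟨θn n ω, hθnmem n ω, (le_of_lt hω : ε ≤ |θn n ω - θ₀|)⟩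
      simp [this]
    simp only [hz]
    exact tendsto_const_nhds
end

section
/- Let (A_1, S_1), (A_2, S_2), … be independent, identically distributed random pairs on a probability space, where A_i is real-valued with |A_1| ≤ M almost surely for some M > 0 and S_i takes values in {0, 1}. Fix a* ∈ ℝ and define the subjective reward R(θ, a, s) = −(a − a*)²·(θ·s + (1 − θ)·(1 − s)). Assume Var(−(A_1 − a*)²·(2S_1 − 1)) > 0, so that the population objective Ψ₀(θ) = Var(R(θ, A_1, S_1)) is a strictly convex quadratic in θ with a unique minimizer θ₀ over [0, 1]. Let θ_n : Ω → [0, 1] be measurable maps such that, almost surely, var_n(R(θ_n, A_1, S_1), …, R(θ_n, A_n, S_n)) = min_{θ ∈ [0,1]} var_n(R(θ, A_1, S_1), …, R(θ, A_n, S_n)), where var_n is the sample variance. Then θ_n converges to θ₀ in probability as n → ∞. -/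
open Finset Filter MeasureTheory ProbabilityTheory

/-- The sample variance of `x 0, …, x (n-1)`. -/
noncomputable def sampleVar (n : ℕ) (x : ℕ → ℝ) : ℝ :=
  (1 / (n : ℝ)) * ∑ i ∈ range n, (x i - (1 / (n : ℝ)) * ∑ j ∈ range n, x j) ^ 2

/-- The subjective reward `R(θ, a, s) = −(a − a*)²·(θ·s + (1 − θ)·(1 − s))`. -/
def subjReward (astar θ a s : ℝ) : ℝ :=
  -(a - astar) ^ 2 * (θ * s + (1 - θ) * (1 - s))

lemma sampleVar_eq (n : ℕ) (x : ℕ → ℝ) :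
    sampleVar n x = (1 / (n : ℝ)) * ∑ i ∈ range n, (x i) ^ 2
      - ((1 / (n : ℝ)) * ∑ i ∈ range n, x i) ^ 2 := by
  rcases Nat.eq_zero_or_pos n with h | h
  · simp [sampleVar, h]
  · have hn : (n : ℝ) ≠ 0 := Nat.cast_ne_zero.mpr h.ne'
    unfold sampleVar
    set m := (1 / (n : ℝ)) * ∑ j ∈ range n, x j with hm
    have e1 : ∀ i ∈ range n, (x i - m) ^ 2 = x i ^ 2 - (2 * m) * x i + m ^ 2 :=
      fun i _ => by ring
    rw [Finset.sum_congr rfl e1, Finset.sum_add_distrib, Finset.sum_sub_distrib,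
      ← Finset.mul_sum, Finset.sum_const, card_range, nsmul_eq_mul]
    have hsum : ∑ j ∈ range n, x j = n * m := by rw [hm]; field_simp
    rw [hsum]
    field_simp
    ring

lemma quad_lb {b c θ₀ : ℝ} (hc : 0 < c) (hθ₀ : θ₀ ∈ Set.Icc (0:ℝ) 1)
    (hmin : ∀ θ ∈ Set.Icc (0:ℝ) 1, θ ≠ θ₀ → b * θ₀ + c * θ₀ ^ 2 < b * θ + c * θ ^ 2) :
    ∀ θ ∈ Set.Icc (0:ℝ) 1, c * (θ - θ₀) ^ 2 ≤ (b * θ + c * θ ^ 2) - (b * θ₀ + c * θ₀ ^ 2) := by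
  obtain ⟨h0, h1⟩ := hθ₀
  have key : ∀ θ ∈ Set.Icc (0:ℝ) 1, 0 ≤ (b + 2 * c * θ₀) * (θ - θ₀) := by
    set g := b + 2 * c * θ₀ with hg
    rcases lt_trichotomy g 0 with hglt | hgeq | hggt
    · -- g < 0 : θ₀ = 1
      have hθ1 : θ₀ = 1 := by
        by_contra hne
        have hlt : θ₀ < 1 := lt_of_le_of_ne h1 hne
        set δ := min (1 - θ₀) (-g / (2 * c)) with hδ
        have hδpos : 0 < δ :=
          lt_min (by linarith) (div_pos (by linarith) (by linarith))
        have hδ1 : δ ≤ 1 - θ₀ := min_le_left _ _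
        have hδ2 : δ ≤ -g / (2 * c) := min_le_right _ _
        have hcδ : c * δ ≤ -g / 2 := by
          have h6 := mul_le_mul_of_nonneg_left hδ2 hc.le
          have h7 : c * (-g / (2 * c)) = -g / 2 := by
            field_simp
          linarith
        have hθmem : θ₀ + δ ∈ Set.Icc (0:ℝ) 1 := ⟨by linarith, by linarith⟩
        have := hmin (θ₀ + δ) hθmem (by intro hcon; nlinarith)
        nlinarith [mul_le_mul_of_nonneg_right hcδ hδpos.le]
      intro θ hθ
      have h2 : θ - θ₀ ≤ 0 := by rw [hθ1]; linarith [hθ.2]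
      nlinarith
    · intro θ hθ; simp [hgeq]
    · -- g > 0 : θ₀ = 0
      have hθ1 : θ₀ = 0 := by
        by_contra hne
        have hlt : 0 < θ₀ := lt_of_le_of_ne h0 (Ne.symm hne)
        set δ := min θ₀ (g / (2 * c)) with hδ
        have hδpos : 0 < δ :=
          lt_min hlt (div_pos hggt (by linarith))
        have hδ1 : δ ≤ θ₀ := min_le_left _ _
        have hδ2 : δ ≤ g / (2 * c) := min_le_right _ _
        have hcδ : c * δ ≤ g / 2 := by
          have h6 := mul_le_mul_of_nonneg_left hδ2 hc.le
          have h7 : c * (g / (2 * c)) = g / 2 := by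
            field_simp
          linarith
        have hθmem : θ₀ - δ ∈ Set.Icc (0:ℝ) 1 := ⟨by linarith, by linarith⟩
        have := hmin (θ₀ - δ) hθmem (by intro hcon; nlinarith)
        nlinarith [mul_le_mul_of_nonneg_right hcδ hδpos.le]
      intro θ hθ
      have h2 : 0 ≤ θ - θ₀ := by rw [hθ1]; linarith [hθ.1]
      nlinarith
  intro θ hθ
  have h := key θ hθ
  nlinarith [sq_nonneg (θ - θ₀)]

lemma quad_argmin_tendsto {b c θ₀ : ℝ} (hc : 0 < c) (hθ₀ : θ₀ ∈ Set.Icc (0:ℝ) 1)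
    (hmin : ∀ θ ∈ Set.Icc (0:ℝ) 1, θ ≠ θ₀ → b * θ₀ + c * θ₀ ^ 2 < b * θ + c * θ ^ 2)
    (bn cn : ℕ → ℝ) (hb : Tendsto bn atTop (nhds b)) (hcn : Tendsto cn atTop (nhds c))
    (t : ℕ → ℝ) (ht : ∀ n, t n ∈ Set.Icc (0:ℝ) 1)
    (hopt : ∀ n, bn n * t n + cn n * t n ^ 2 ≤ bn n * θ₀ + cn n * θ₀ ^ 2) :
    Tendsto t atTop (nhds θ₀) := by
  have hlb := quad_lb hc hθ₀ hmin
  set e := fun n => |bn n - b| + |cn n - c| with he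
  have herr : ∀ n, ∀ θ ∈ Set.Icc (0:ℝ) 1,
      |(bn n * θ + cn n * θ ^ 2) - (b * θ + c * θ ^ 2)| ≤ e n := by
    intro n θ hθ
    obtain ⟨hθ0, hθ1⟩ := hθ
    have h1 : |(bn n - b) * θ| ≤ |bn n - b| := by
      rw [abs_mul, abs_of_nonneg hθ0]
      exact mul_le_of_le_one_right (abs_nonneg _) hθ1
    have h2 : |(cn n - c) * θ ^ 2| ≤ |cn n - c| := by
      rw [abs_mul, abs_of_nonneg (sq_nonneg θ)]
      exact mul_le_of_le_one_right (abs_nonneg _) (by nlinarith)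
    calc |(bn n * θ + cn n * θ ^ 2) - (b * θ + c * θ ^ 2)|
        = |(bn n - b) * θ + (cn n - c) * θ ^ 2| := by ring_nf
      _ ≤ |(bn n - b) * θ| + |(cn n - c) * θ ^ 2| := abs_add_le _ _
      _ ≤ e n := by rw [he]; dsimp only; linarith
  have hkey : ∀ n, c * (t n - θ₀) ^ 2 ≤ 2 * e n := by
    intro n
    have h1 := hlb (t n) (ht n)
    have h2 := herr n (t n) (ht n)
    have h3 := herr n θ₀ hθ₀
    have h4 := hopt n
    have h2' := abs_le.mp h2
    have h3' := abs_le.mp h3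
    linarith [h2'.1, h2'.2, h3'.1, h3'.2]
  have hez : Tendsto e atTop (nhds 0) := by
    have h1 : Tendsto (fun n => bn n - b) atTop (nhds 0) := by
      have := hb.sub (tendsto_const_nhds : Tendsto (fun _ : ℕ => b) atTop (nhds b))
      simpa using this
    have h2 : Tendsto (fun n => cn n - c) atTop (nhds 0) := by
      have := hcn.sub (tendsto_const_nhds : Tendsto (fun _ : ℕ => c) atTop (nhds c))
      simpa using this
    have := (h1.abs.add h2.abs)
    simpa using this
  have hsq : Tendsto (fun n => (t n - θ₀) ^ 2) atTop (nhds 0) := by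
    apply squeeze_zero (fun n => sq_nonneg _) (fun n => ?_)
      (by simpa using hez.const_mul (2 / c))
    have h := hkey n
    have h3 : 2 / c * e n = 2 * e n / c := by ring
    rw [h3, le_div_iff₀ hc]
    linarith
  have habs : Tendsto (fun n => |t n - θ₀|) atTop (nhds 0) := by
    have := (Real.continuous_sqrt.tendsto 0).comp hsq
    simpa [Real.sqrt_sq_eq_abs, Function.comp_def] using this
  rw [tendsto_iff_dist_tendsto_zero]
  simpa [Real.dist_eq] using habs

lemma slln_comp {Ω : Type*} [MeasurableSpace Ω] (P : Measure Ω) [IsProbabilityMeasure P]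
    (Z : ℕ → Ω → ℝ × ℝ) (hmeasZ : ∀ i, Measurable (Z i))
    (hIndep : iIndepFun Z P)
    (hIdent : ∀ i, IdentDistrib (Z i) (Z 0) P P)
    (φ : ℝ × ℝ → ℝ) (hφ : Measurable φ) (C : ℝ) (hC : ∀ᵐ ω ∂P, |φ (Z 0 ω)| ≤ C) :
    Integrable (fun ω => φ (Z 0 ω)) P ∧
      ∀ᵐ ω ∂P, Tendsto (fun n : ℕ => (1 / (n : ℝ)) * ∑ i ∈ range n, φ (Z i ω)) atTop
        (nhds (∫ ω, φ (Z 0 ω) ∂P)) := by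
  have hmeasφ : ∀ i, Measurable (fun ω => φ (Z i ω)) := fun i => hφ.comp (hmeasZ i)
  have hint : Integrable (fun ω => φ (Z 0 ω)) P := by
    have hmem : MemLp (fun ω => φ (Z 0 ω)) 1 P :=
      MemLp.of_bound (hmeasφ 0).aestronglyMeasurable C
        (hC.mono fun ω h => by simpa [Real.norm_eq_abs] using h)
    exact hmem.integrable le_rfl
  refine ⟨hint, ?_⟩
  have hindep : Pairwise (Function.onFun (IndepFun · · P) fun i ω => φ (Z i ω)) := by
    intro i j hij
    exact (hIndep.indepFun hij).comp hφ hφ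
  have hident : ∀ i, IdentDistrib (fun ω => φ (Z i ω)) (fun ω => φ (Z 0 ω)) P P :=
    fun i => (hIdent i).comp hφ
  have := strong_law_ae (fun i ω => φ (Z i ω)) hint hindep hident
  filter_upwards [this] with ω hω
  simpa [smul_eq_mul, one_div] using hω

/-- Consistency of the minimum-sample-variance estimator `θn` of the
tolerance-for-divergence parameter: `θn → θ₀` in probability. -/
theorem tolerance_estimator_consistent
    {Ω : Type*} [MeasurableSpace Ω] (P : Measure Ω) [IsProbabilityMeasure P]
    (A S : ℕ → Ω → ℝ)
    (hIndep : iIndepFun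
      (fun i => fun ω => (A i ω, S i ω)) P)
    (hIdent : ∀ i, IdentDistrib (fun ω => (A i ω, S i ω)) (fun ω => (A 0 ω, S 0 ω)) P P)
    (hmeas : ∀ i, Measurable (A i) ∧ Measurable (S i))
    (M : ℝ) (hM : 0 < M) (hA : ∀ᵐ ω ∂P, |A 0 ω| ≤ M)
    (hS : ∀ i, ∀ᵐ ω ∂P, S i ω = 0 ∨ S i ω = 1)
    (astar : ℝ)
    (hVarpos : 0 < variance (fun ω => -(A 0 ω - astar) ^ 2 * (2 * S 0 ω - 1)) P)
    (θ₀ : ℝ) (hθ₀mem : θ₀ ∈ Set.Icc (0 : ℝ) 1)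
    (hθ₀min : ∀ θ ∈ Set.Icc (0 : ℝ) 1, θ ≠ θ₀ →
      variance (fun ω => subjReward astar θ₀ (A 0 ω) (S 0 ω)) P <
        variance (fun ω => subjReward astar θ (A 0 ω) (S 0 ω)) P)
    (θn : ℕ → Ω → ℝ) (hθnmeas : ∀ n, Measurable (θn n))
    (hθnmem : ∀ n, ∀ ω, θn n ω ∈ Set.Icc (0 : ℝ) 1)
    (hθnmin : ∀ᵐ ω ∂P, ∀ n : ℕ,
      sampleVar n (fun i => subjReward astar (θn n ω) (A i ω) (S i ω)) =
          sInf (Set.image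
            (fun θ => sampleVar n (fun i => subjReward astar θ (A i ω) (S i ω)))
            (Set.Icc (0 : ℝ) 1)) ∧
        ∀ θ ∈ Set.Icc (0 : ℝ) 1,
          sampleVar n (fun i => subjReward astar (θn n ω) (A i ω) (S i ω)) ≤
            sampleVar n (fun i => subjReward astar θ (A i ω) (S i ω))) :
    ∀ ε : ℝ, 0 < ε →
      Tendsto (fun n => P {ω | ε < |θn n ω - θ₀|}) atTop (nhds 0) := by
  classical
  intro ε hε
  set Z : ℕ → Ω → ℝ × ℝ := fun i => fun ω => (A i ω, S i ω) with hZ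
  have hmeasZ : ∀ i, Measurable (Z i) := fun i => (hmeas i).1.prodMk (hmeas i).2
  set f1 : ℝ × ℝ → ℝ := fun p => -(p.1 - astar) ^ 2 * (1 - p.2) with hf1
  set f2 : ℝ × ℝ → ℝ := fun p => -(p.1 - astar) ^ 2 * (2 * p.2 - 1) with hf2
  set f3 : ℝ × ℝ → ℝ := fun p => f1 p * f1 p with hf3
  set f4 : ℝ × ℝ → ℝ := fun p => f1 p * f2 p with hf4
  set f5 : ℝ × ℝ → ℝ := fun p => f2 p * f2 p with hf5
  have hm1 : Measurable f1 := by
    rw [hf1]; fun_prop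
  have hm2 : Measurable f2 := by
    rw [hf2]; fun_prop
  have hm3 : Measurable f3 := hm1.mul hm1
  have hm4 : Measurable f4 := hm1.mul hm2
  have hm5 : Measurable f5 := hm2.mul hm2
  set K : ℝ := (M + |astar|) ^ 2 with hK
  have hKnn : 0 ≤ K := by positivity
  have hb12 : ∀ᵐ ω ∂P, |f1 (Z 0 ω)| ≤ K ∧ |f2 (Z 0 ω)| ≤ K := by
    filter_upwards [hA, hS 0] with ω hAω hSω
    have hb : (A 0 ω - astar) ^ 2 ≤ K := by
      have h1 := abs_le.mp hAω
      have h2 := le_abs_self astar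
      have h3 := neg_abs_le astar
      rw [hK]
      nlinarith [abs_nonneg astar, h1.1, h1.2]
    have e1 : |f1 (Z 0 ω)| = (A 0 ω - astar) ^ 2 * |1 - S 0 ω| := by
      rw [show f1 (Z 0 ω) = -(A 0 ω - astar) ^ 2 * (1 - S 0 ω) from rfl, abs_mul,
        abs_neg, abs_of_nonneg (sq_nonneg _)]
    have e2 : |f2 (Z 0 ω)| = (A 0 ω - astar) ^ 2 * |2 * S 0 ω - 1| := by
      rw [show f2 (Z 0 ω) = -(A 0 ω - astar) ^ 2 * (2 * S 0 ω - 1) from rfl, abs_mul,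
        abs_neg, abs_of_nonneg (sq_nonneg _)]
    constructor
    · rw [e1]
      rcases hSω with h | h <;> rw [h] <;> norm_num
      · exact hb
      · exact hKnn
    · rw [e2]
      rcases hSω with h | h <;> rw [h] <;> norm_num <;> exact hb
  have hb1 : ∀ᵐ ω ∂P, |f1 (Z 0 ω)| ≤ K := hb12.mono fun ω h => h.1
  have hb2 : ∀ᵐ ω ∂P, |f2 (Z 0 ω)| ≤ K := hb12.mono fun ω h => h.2
  have hb3 : ∀ᵐ ω ∂P, |f3 (Z 0 ω)| ≤ K * K := by
    filter_upwards [hb12] with ω h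
    rw [hf3]; dsimp only; rw [abs_mul]
    exact mul_le_mul h.1 h.1 (abs_nonneg _) hKnn
  have hb4 : ∀ᵐ ω ∂P, |f4 (Z 0 ω)| ≤ K * K := by
    filter_upwards [hb12] with ω h
    rw [hf4]; dsimp only; rw [abs_mul]
    exact mul_le_mul h.1 h.2 (abs_nonneg _) hKnn
  have hb5 : ∀ᵐ ω ∂P, |f5 (Z 0 ω)| ≤ K * K := by
    filter_upwards [hb12] with ω h
    rw [hf5]; dsimp only; rw [abs_mul]
    exact mul_le_mul h.2 h.2 (abs_nonneg _) hKnn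
  have H1 := slln_comp P Z hmeasZ hIndep hIdent f1 hm1 K hb1
  have H2 := slln_comp P Z hmeasZ hIndep hIdent f2 hm2 K hb2
  have H3 := slln_comp P Z hmeasZ hIndep hIdent f3 hm3 (K * K) hb3
  have H4 := slln_comp P Z hmeasZ hIndep hIdent f4 hm4 (K * K) hb4
  have H5 := slln_comp P Z hmeasZ hIndep hIdent f5 hm5 (K * K) hb5
  set μ1 : ℝ := ∫ ω, f1 (Z 0 ω) ∂P with hμ1
  set μ2 : ℝ := ∫ ω, f2 (Z 0 ω) ∂P with hμ2
  set μ3 : ℝ := ∫ ω, f3 (Z 0 ω) ∂P with hμ3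
  set μ4 : ℝ := ∫ ω, f4 (Z 0 ω) ∂P with hμ4
  set μ5 : ℝ := ∫ ω, f5 (Z 0 ω) ∂P with hμ5
  have hL1 : MemLp (fun ω => f1 (Z 0 ω)) 2 P :=
    MemLp.of_bound (hm1.comp (hmeasZ 0)).aestronglyMeasurable K
      (hb1.mono fun ω h => by simpa [Real.norm_eq_abs] using h)
  have hL2 : MemLp (fun ω => f2 (Z 0 ω)) 2 P :=
    MemLp.of_bound (hm2.comp (hmeasZ 0)).aestronglyMeasurable K
      (hb2.mono fun ω h => by simpa [Real.norm_eq_abs] using h)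
  -- population variance expansion
  have hvar : ∀ θ : ℝ, variance (fun ω => subjReward astar θ (A 0 ω) (S 0 ω)) P
      = (μ3 - μ1 ^ 2) + (2 * (μ4 - μ1 * μ2)) * θ + (μ5 - μ2 ^ 2) * θ ^ 2 := by
    intro θ
    have hRdec : (fun ω => subjReward astar θ (A 0 ω) (S 0 ω))
        = fun ω => f1 (Z 0 ω) + θ * f2 (Z 0 ω) := by
      funext ω
      simp only [subjReward, hf1, hf2, hZ]
      ring
    rw [hRdec]
    have hL : MemLp (fun ω => f1 (Z 0 ω) + θ * f2 (Z 0 ω)) 2 P := by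
      have := hL1.add (hL2.const_mul θ)
      exact this
    rw [variance_eq_sub hL]
    have e : (fun ω => f1 (Z 0 ω) + θ * f2 (Z 0 ω)) ^ 2
        = fun a => f3 (Z 0 a) + ((2 * θ) * f4 (Z 0 a) + θ ^ 2 * f5 (Z 0 a)) := by
      funext a
      simp only [Pi.pow_apply, hf3, hf4, hf5]
      ring
    rw [e]
    beta_reduce
    have i4 : Integrable (fun x => 2 * θ * f4 (Z 0 x)) P := H4.1.const_mul _
    have i5 : Integrable (fun x => θ ^ 2 * f5 (Z 0 x)) P := H5.1.const_mul _
    have i45 : Integrable (fun x => 2 * θ * f4 (Z 0 x) + θ ^ 2 * f5 (Z 0 x)) P := i4.add i5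
    have i2 : Integrable (fun x => θ * f2 (Z 0 x)) P := H2.1.const_mul _
    rw [integral_add H3.1 i45, integral_add i4 i5,
      integral_const_mul, integral_const_mul,
      integral_add H1.1 i2, integral_const_mul]
    rw [← hμ1, ← hμ2, ← hμ3, ← hμ4, ← hμ5]
    ring
  -- positivity of the quadratic coefficient
  have hcpos : 0 < μ5 - μ2 ^ 2 := by
    have hv2 : variance (fun ω => f2 (Z 0 ω)) P = μ5 - μ2 ^ 2 := by
      rw [variance_eq_sub hL2]
      have e : (fun ω => f2 (Z 0 ω)) ^ 2 = fun a => f5 (Z 0 a) := by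
        funext a
        simp only [Pi.pow_apply, hf5]
        ring
      rw [e, ← hμ2, ← hμ5]
    have hee : (fun ω => -(A 0 ω - astar) ^ 2 * (2 * S 0 ω - 1)) = fun ω => f2 (Z 0 ω) := rfl
    rw [hee] at hVarpos
    linarith [hv2 ▸ hVarpos]
  -- population minimality in quadratic form
  have hminq : ∀ θ ∈ Set.Icc (0:ℝ) 1, θ ≠ θ₀ →
      (2 * (μ4 - μ1 * μ2)) * θ₀ + (μ5 - μ2 ^ 2) * θ₀ ^ 2 <
        (2 * (μ4 - μ1 * μ2)) * θ + (μ5 - μ2 ^ 2) * θ ^ 2 := by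
    intro θ hθ hne
    have h := hθ₀min θ hθ hne
    rw [hvar θ, hvar θ₀] at h
    linarith
  -- sample variance expansion
  have hsv : ∀ (ω : Ω) (n : ℕ) (θ : ℝ),
      sampleVar n (fun i => subjReward astar θ (A i ω) (S i ω)) =
        ((1 / (n:ℝ)) * ∑ i ∈ range n, f3 (Z i ω)
            - ((1 / (n:ℝ)) * ∑ i ∈ range n, f1 (Z i ω)) ^ 2)
        + (2 * ((1 / (n:ℝ)) * ∑ i ∈ range n, f4 (Z i ω)
            - ((1 / (n:ℝ)) * ∑ i ∈ range n, f1 (Z i ω))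
              * ((1 / (n:ℝ)) * ∑ i ∈ range n, f2 (Z i ω)))) * θ
        + ((1 / (n:ℝ)) * ∑ i ∈ range n, f5 (Z i ω)
            - ((1 / (n:ℝ)) * ∑ i ∈ range n, f2 (Z i ω)) ^ 2) * θ ^ 2 := by
    intro ω n θ
    have h1 : (fun i => subjReward astar θ (A i ω) (S i ω))
        = fun i => f1 (Z i ω) + θ * f2 (Z i ω) := by
      funext i
      simp only [subjReward, hf1, hf2, hZ]
      ring
    rw [h1, sampleVar_eq]
    have hs1 : ∑ i ∈ range n, (f1 (Z i ω) + θ * f2 (Z i ω))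
        = (∑ i ∈ range n, f1 (Z i ω)) + θ * ∑ i ∈ range n, f2 (Z i ω) := by
      rw [Finset.sum_add_distrib, Finset.mul_sum]
    have hs2 : ∑ i ∈ range n, (f1 (Z i ω) + θ * f2 (Z i ω)) ^ 2
        = ∑ i ∈ range n, f3 (Z i ω) + (2 * θ) * ∑ i ∈ range n, f4 (Z i ω)
          + θ ^ 2 * ∑ i ∈ range n, f5 (Z i ω) := by
      rw [Finset.mul_sum, Finset.mul_sum, ← Finset.sum_add_distrib, ← Finset.sum_add_distrib]
      refine Finset.sum_congr rfl fun i _ => ?_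
      simp only [hf3, hf4, hf5]
      ring
    rw [hs2, hs1]
    ring
  -- a.s. convergence of the estimator
  have hae : ∀ᵐ ω ∂P, Tendsto (fun n => θn n ω) atTop (nhds θ₀) := by
    filter_upwards [H1.2, H2.2, H3.2, H4.2, H5.2, hθnmin] with ω h1 h2 h3 h4 h5 hopt
    refine quad_argmin_tendsto hcpos hθ₀mem hminq
      (fun n => 2 * ((1 / (n:ℝ)) * ∑ i ∈ range n, f4 (Z i ω)
        - ((1 / (n:ℝ)) * ∑ i ∈ range n, f1 (Z i ω))
          * ((1 / (n:ℝ)) * ∑ i ∈ range n, f2 (Z i ω))))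
      (fun n => (1 / (n:ℝ)) * ∑ i ∈ range n, f5 (Z i ω)
        - ((1 / (n:ℝ)) * ∑ i ∈ range n, f2 (Z i ω)) ^ 2)
      ?_ ?_ (fun n => θn n ω) (fun n => hθnmem n ω) ?_
    · exact (h4.sub (h1.mul h2)).const_mul 2
    · exact h5.sub (h2.pow 2)
    · intro n
      have h := (hopt n).2 θ₀ hθ₀mem
      rw [hsv ω n (θn n ω), hsv ω n θ₀] at h
      linarith
  -- conclude convergence in probability
  have hTIM := tendstoInMeasure_of_tendsto_ae (μ := P)
    (f := fun n => θn n) (g := fun _ => θ₀)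
    (fun n => (hθnmeas n).aestronglyMeasurable) hae
  have h := tendstoInMeasure_iff_norm.mp hTIM ε hε
  refine tendsto_of_tendsto_of_tendsto_of_le_of_le tendsto_const_nhds h
    (fun n => zero_le) (fun n => measure_mono ?_)
  intro ω hω
  simp only [Set.mem_setOf_eq] at hω ⊢
  rw [Real.norm_eq_abs]
  exact hω.le
end

section
/- Let (A_1, S_1), (A_2, S_2), … be independent, identically distributed random pairs, where A_i is real-valued with |A_1| ≤ M almost surely for some M > 0 and S_i takes values in {0, 1}. Fix a* ∈ ℝ and define the subjective reward R(θ, a, s) = −(a − a*)²·(θ·s + (1 − θ)·(1 − s)). Then the sample-variance objective converges uniformly over θ ∈ [0, 1] in probability to the population objective: sup_{θ ∈ [0,1]} | var_n(R(θ, A_1, S_1), …, R(θ, A_n, S_n)) − Var(R(θ, A_1, S_1)) | → 0 in probability as n → ∞. -/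
open Finset Filter MeasureTheory ProbabilityTheory
open Topology

lemma aux_sampleVar_eq {n : ℕ} (hn : 1 ≤ n) (x : ℕ → ℝ) :
    sampleVar n x =
      (1 / (n : ℝ)) * ∑ i ∈ range n, (x i) ^ 2 -
        ((1 / (n : ℝ)) * ∑ i ∈ range n, x i) ^ 2 := by
  have hn' : (n : ℝ) ≠ 0 := Nat.cast_ne_zero.2 (by omega)
  unfold sampleVar
  set m := (1 / (n : ℝ)) * ∑ j ∈ range n, x j with hm
  have h1 : ∑ i ∈ range n, (x i - m) ^ 2
      = ∑ i ∈ range n, (x i) ^ 2 - 2 * m * ∑ i ∈ range n, x i + n * m ^ 2 := by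
    rw [Finset.sum_congr rfl (fun i _ => show (x i - m)^2 = (x i)^2 - 2*m*(x i) + m^2 by ring)]
    rw [Finset.sum_add_distrib, Finset.sum_sub_distrib, Finset.sum_const, card_range,
      ← Finset.mul_sum]
    simp [nsmul_eq_mul]
  rw [h1]
  have h2 : ∑ j ∈ range n, x j = n * m := by
    rw [hm]; field_simp
  rw [h2]
  field_simp
  ring

lemma aux_slln {Ω : Type*} [MeasurableSpace Ω] (P : Measure Ω) [IsProbabilityMeasure P]
    (Z : ℕ → Ω → ℝ × ℝ) (hmeasZ : ∀ i, Measurable (Z i))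
    (hIndep : iIndepFun Z P)
    (hIdent : ∀ i, IdentDistrib (Z i) (Z 0) P P)
    (φ : ℝ × ℝ → ℝ) (hφ : Measurable φ)
    (C : ℝ) (hC : ∀ᵐ ω ∂P, |φ (Z 0 ω)| ≤ C) :
    ∀ᵐ ω ∂P, Tendsto (fun n : ℕ => (1 / (n : ℝ)) * ∑ i ∈ range n, φ (Z i ω)) atTop
      (𝓝 (∫ ω, φ (Z 0 ω) ∂P)) := by
  have hint : Integrable (fun ω => φ (Z 0 ω)) P := by
    refine (integrable_const C).mono' ((hφ.comp (hmeasZ 0)).aestronglyMeasurable) ?_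
    filter_upwards [hC] with ω h using by simpa [Real.norm_eq_abs] using h
  have h := strong_law_ae (μ := P) (fun i ω => φ (Z i ω)) hint
    (fun i j hij => (hIndep.indepFun hij).comp hφ hφ)
    (fun i => (hIdent i).comp hφ)
  filter_upwards [h] with ω hω
  simpa [smul_eq_mul, one_div] using hω

set_option maxHeartbeats 1000000
/-- For i.i.d. bounded pairs `(A i, S i)` with `S i ∈ {0,1}`, the
sample-variance objective converges to the population objective uniformly over
`θ ∈ [0,1]`, in probability. -/
theorem sample_variance_objective_uniformly_consistent
    {Ω : Type*} [MeasurableSpace Ω] (P : Measure Ω) [IsProbabilityMeasure P]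
    (A S : ℕ → Ω → ℝ)
    (hIndep : iIndepFun
      (fun i => fun ω => (A i ω, S i ω)) P)
    (hIdent : ∀ i, IdentDistrib (fun ω => (A i ω, S i ω)) (fun ω => (A 0 ω, S 0 ω)) P P)
    (hmeas : ∀ i, Measurable (A i) ∧ Measurable (S i))
    (M : ℝ) (hM : 0 < M) (hA : ∀ᵐ ω ∂P, |A 0 ω| ≤ M)
    (hS : ∀ i, ∀ᵐ ω ∂P, S i ω = 0 ∨ S i ω = 1)
    (astar : ℝ) :
    ∀ ε : ℝ, 0 < ε →
      Tendsto
        (fun n : ℕ =>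
          P {ω | ε <
              ⨆ θ : Set.Icc (0 : ℝ) 1,
                |sampleVar n (fun i => subjReward astar θ (A i ω) (S i ω)) -
                  variance (fun ω' => subjReward astar θ (A 0 ω') (S 0 ω')) P|})
        atTop (nhds 0) := by
  intro ε hε
  haveI : Nonempty (Set.Icc (0:ℝ) 1) := ⟨⟨0, by norm_num⟩⟩
  have hZmeas : ∀ i, Measurable (fun ω => (A i ω, S i ω)) :=
    fun i => (hmeas i).1.prodMk (hmeas i).2
  -- the affine pieces
  set g : ℝ × ℝ → ℝ := fun p => -(p.1 - astar) ^ 2 * (1 - p.2) with hgdef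
  set d : ℝ × ℝ → ℝ := fun p => (p.1 - astar) ^ 2 * (1 - 2 * p.2) with hddef
  have hgm : Measurable g := by
    apply Measurable.mul
    · exact ((measurable_fst.sub measurable_const).pow measurable_const).neg
    · exact measurable_const.sub measurable_snd
  have hdm : Measurable d := by
    apply Measurable.mul
    · exact (measurable_fst.sub measurable_const).pow measurable_const
    · exact measurable_const.sub (measurable_const.mul measurable_snd)
  have hR : ∀ θ a s : ℝ, subjReward astar θ a s = g (a, s) + θ * d (a, s) := by
    intro θ a s
    simp only [subjReward, hgdef, hddef]
    ring
  set B : ℝ := (M + |astar|) ^ 2 with hBdef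
  -- pointwise a.e. bounds for g and d at time 0
  have hbd : ∀ᵐ ω ∂P, |g (A 0 ω, S 0 ω)| ≤ B ∧ |d (A 0 ω, S 0 ω)| ≤ B := by
    filter_upwards [hA, hS 0] with ω h1 h2
    have h1' := abs_le.1 h1
    have ha1 : astar ≤ |astar| := le_abs_self _
    have ha2 : -|astar| ≤ astar := neg_abs_le _
    have hsq : (A 0 ω - astar) ^ 2 ≤ B := by
      rw [hBdef]; nlinarith [h1'.1, h1'.2]
    have hsq0 : (0:ℝ) ≤ (A 0 ω - astar) ^ 2 := sq_nonneg _
    constructor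
    · rw [abs_le]
      rcases h2 with h | h <;> simp only [hgdef, h] <;> constructor <;> nlinarith
    · rw [abs_le]
      rcases h2 with h | h <;> simp only [hddef, h] <;> constructor <;> nlinarith
  have hB0 : (0:ℝ) ≤ B := sq_nonneg _
  -- the five test functions
  set g2 : ℝ × ℝ → ℝ := fun p => (g p) ^ 2 with hg2def
  set gd : ℝ × ℝ → ℝ := fun p => g p * d p with hgddef
  set d2 : ℝ × ℝ → ℝ := fun p => (d p) ^ 2 with hd2def
  have hg2m : Measurable g2 := hgm.pow measurable_const
  have hgdm : Measurable gd := hgm.mul hdm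
  have hd2m : Measurable d2 := hdm.pow measurable_const
  have hbd_g2 : ∀ᵐ ω ∂P, |g2 (A 0 ω, S 0 ω)| ≤ B ^ 2 := by
    filter_upwards [hbd] with ω h
    rw [show g2 (A 0 ω, S 0 ω) = (g (A 0 ω, S 0 ω)) ^ 2 from rfl, abs_pow]
    exact pow_le_pow_left₀ (abs_nonneg _) h.1 2
  have hbd_gd : ∀ᵐ ω ∂P, |gd (A 0 ω, S 0 ω)| ≤ B ^ 2 := by
    filter_upwards [hbd] with ω h
    rw [show gd (A 0 ω, S 0 ω) = g (A 0 ω, S 0 ω) * d (A 0 ω, S 0 ω) from rfl, abs_mul, pow_two]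
    exact mul_le_mul h.1 h.2 (abs_nonneg _) hB0
  have hbd_d2 : ∀ᵐ ω ∂P, |d2 (A 0 ω, S 0 ω)| ≤ B ^ 2 := by
    filter_upwards [hbd] with ω h
    rw [show d2 (A 0 ω, S 0 ω) = (d (A 0 ω, S 0 ω)) ^ 2 from rfl, abs_pow]
    exact pow_le_pow_left₀ (abs_nonneg _) h.2 2
  -- empirical means
  set mm : (ℝ × ℝ → ℝ) → ℕ → Ω → ℝ :=
    fun φ n ω => (1 / (n : ℝ)) * ∑ i ∈ range n, φ (A i ω, S i ω) with hmmdef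
  -- population means
  set Eg : ℝ := ∫ ω, g (A 0 ω, S 0 ω) ∂P with hEg
  set Ed : ℝ := ∫ ω, d (A 0 ω, S 0 ω) ∂P with hEd
  set Eg2 : ℝ := ∫ ω, g2 (A 0 ω, S 0 ω) ∂P with hEg2
  set Egd : ℝ := ∫ ω, gd (A 0 ω, S 0 ω) ∂P with hEgd
  set Ed2 : ℝ := ∫ ω, d2 (A 0 ω, S 0 ω) ∂P with hEd2
  -- integrability
  have hint : ∀ (φ : ℝ × ℝ → ℝ), Measurable φ → ∀ C : ℝ,
      (∀ᵐ ω ∂P, |φ (A 0 ω, S 0 ω)| ≤ C) →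
      Integrable (fun ω => φ (A 0 ω, S 0 ω)) P := by
    intro φ hφ C hC
    refine (integrable_const C).mono' ((hφ.comp (hZmeas 0)).aestronglyMeasurable) ?_
    filter_upwards [hC] with ω h using by simpa [Real.norm_eq_abs] using h
  have ig : Integrable (fun ω => g (A 0 ω, S 0 ω)) P :=
    hint g hgm B (hbd.mono fun ω h => h.1)
  have idd : Integrable (fun ω => d (A 0 ω, S 0 ω)) P :=
    hint d hdm B (hbd.mono fun ω h => h.2)
  have ig2 : Integrable (fun ω => g2 (A 0 ω, S 0 ω)) P := hint g2 hg2m (B^2) hbd_g2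
  have igd : Integrable (fun ω => gd (A 0 ω, S 0 ω)) P := hint gd hgdm (B^2) hbd_gd
  have id2 : Integrable (fun ω => d2 (A 0 ω, S 0 ω)) P := hint d2 hd2m (B^2) hbd_d2
  -- variance expansion
  have hvar : ∀ θ : ℝ,
      variance (fun ω' => subjReward astar θ (A 0 ω') (S 0 ω')) P
        = Eg2 + 2 * θ * Egd + θ ^ 2 * Ed2 - (Eg + θ * Ed) ^ 2 := by
    intro θ
    have hXm : Measurable (fun ω' => subjReward astar θ (A 0 ω') (S 0 ω')) := by
      have : (fun ω' => subjReward astar θ (A 0 ω') (S 0 ω'))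
          = fun ω' => g (A 0 ω', S 0 ω') + θ * d (A 0 ω', S 0 ω') := by
        funext ω'; rw [hR]
      rw [this]
      exact (hgm.comp (hZmeas 0)).add (measurable_const.mul (hdm.comp (hZmeas 0)))
    have hXlp : MemLp (fun ω' => subjReward astar θ (A 0 ω') (S 0 ω')) 2 P := by
      refine MemLp.of_bound hXm.aestronglyMeasurable (B + |θ| * B) ?_
      filter_upwards [hbd] with ω h
      rw [Real.norm_eq_abs, hR]
      have hmul : |θ * d (A 0 ω, S 0 ω)| = |θ| * |d (A 0 ω, S 0 ω)| := abs_mul θ _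
      have hd' : |θ| * |d (A 0 ω, S 0 ω)| ≤ |θ| * B :=
        mul_le_mul_of_nonneg_left h.2 (abs_nonneg θ)
      calc |g (A 0 ω, S 0 ω) + θ * d (A 0 ω, S 0 ω)|
          ≤ |g (A 0 ω, S 0 ω)| + |θ * d (A 0 ω, S 0 ω)| := abs_add_le _ _
        _ ≤ B + |θ| * B := by rw [hmul]; exact add_le_add h.1 hd'
    rw [variance_eq_sub hXlp]
    have e1 : ∫ ω, ((fun ω' => subjReward astar θ (A 0 ω') (S 0 ω')) ^ 2) ω ∂P
        = Eg2 + 2 * θ * Egd + θ ^ 2 * Ed2 := by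
      have estep : ∫ ω, ((fun ω' => subjReward astar θ (A 0 ω') (S 0 ω')) ^ 2) ω ∂P
          = ∫ ω, (g2 (A 0 ω, S 0 ω) + 2 * θ * gd (A 0 ω, S 0 ω)
              + θ ^ 2 * d2 (A 0 ω, S 0 ω)) ∂P := by
        refine integral_congr_ae (Filter.Eventually.of_forall fun ω => ?_)
        show (subjReward astar θ (A 0 ω) (S 0 ω)) ^ 2 = _
        rw [hR]
        show _ = (g (A 0 ω, S 0 ω)) ^ 2 + 2 * θ * (g (A 0 ω, S 0 ω) * d (A 0 ω, S 0 ω))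
            + θ ^ 2 * (d (A 0 ω, S 0 ω)) ^ 2
        ring
      have i1 : Integrable (fun ω => 2 * θ * gd (A 0 ω, S 0 ω)) P := igd.const_mul _
      have i2 : Integrable (fun ω => θ ^ 2 * d2 (A 0 ω, S 0 ω)) P := id2.const_mul _
      have i12 : Integrable
          (fun ω => g2 (A 0 ω, S 0 ω) + 2 * θ * gd (A 0 ω, S 0 ω)) P := ig2.add i1
      rw [estep, integral_add i12 i2, integral_add ig2 i1,
        integral_const_mul, integral_const_mul]
    have e2 : ∫ ω, subjReward astar θ (A 0 ω) (S 0 ω) ∂P = Eg + θ * Ed := by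
      have estep : ∫ ω, subjReward astar θ (A 0 ω) (S 0 ω) ∂P
          = ∫ ω, (g (A 0 ω, S 0 ω) + θ * d (A 0 ω, S 0 ω)) ∂P :=
        integral_congr_ae (Filter.Eventually.of_forall fun ω => hR θ _ _)
      have i3 : Integrable (fun ω => θ * d (A 0 ω, S 0 ω)) P := idd.const_mul _
      rw [estep, integral_add ig i3, integral_const_mul]
    rw [e1, e2]
  -- sample variance expansion
  have hsv : ∀ n : ℕ, 1 ≤ n → ∀ ω : Ω, ∀ θ : ℝ,
      sampleVar n (fun i => subjReward astar θ (A i ω) (S i ω))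
        = mm g2 n ω + 2 * θ * mm gd n ω + θ ^ 2 * mm d2 n ω
            - (mm g n ω + θ * mm d n ω) ^ 2 := by
    intro n hn ω θ
    rw [aux_sampleVar_eq hn]
    have e1 : ∑ i ∈ range n, (subjReward astar θ (A i ω) (S i ω)) ^ 2
        = ∑ i ∈ range n, g2 (A i ω, S i ω)
          + 2 * θ * ∑ i ∈ range n, gd (A i ω, S i ω)
          + θ ^ 2 * ∑ i ∈ range n, d2 (A i ω, S i ω) := by
      rw [Finset.mul_sum, Finset.mul_sum, ← Finset.sum_add_distrib, ← Finset.sum_add_distrib]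
      refine Finset.sum_congr rfl fun i _ => ?_
      simp only [hR, hg2def, hgddef, hd2def]
      ring
    have e2 : ∑ i ∈ range n, subjReward astar θ (A i ω) (S i ω)
        = ∑ i ∈ range n, g (A i ω, S i ω) + θ * ∑ i ∈ range n, d (A i ω, S i ω) := by
      rw [Finset.mul_sum, ← Finset.sum_add_distrib]
      exact Finset.sum_congr rfl fun i _ => hR θ _ _
    rw [e1, e2]
    simp only [hmmdef]
    ring
  -- the dominating sequence
  set Y : ℕ → Ω → ℝ := fun n ω =>
    |(mm g2 n ω - Eg2) - ((mm g n ω) ^ 2 - Eg ^ 2)|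
      + |2 * ((mm gd n ω - Egd) - (mm g n ω * mm d n ω - Eg * Ed))|
      + |(mm d2 n ω - Ed2) - ((mm d n ω) ^ 2 - Ed ^ 2)| with hYdef
  -- key pointwise bound
  have key : ∀ n : ℕ, 1 ≤ n → ∀ ω : Ω, ∀ θ : ℝ, 0 ≤ θ → θ ≤ 1 →
      |sampleVar n (fun i => subjReward astar θ (A i ω) (S i ω)) -
        variance (fun ω' => subjReward astar θ (A 0 ω') (S 0 ω')) P| ≤ Y n ω := by
    intro n hn ω θ hθ0 hθ1
    rw [hsv n hn ω θ, hvar θ]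
    have hθabs : |θ| ≤ 1 := abs_le.2 ⟨by linarith, hθ1⟩
    set t1 : ℝ := (mm g2 n ω - Eg2) - ((mm g n ω) ^ 2 - Eg ^ 2) with ht1
    set t2 : ℝ := 2 * ((mm gd n ω - Egd) - (mm g n ω * mm d n ω - Eg * Ed)) with ht2
    set t3 : ℝ := (mm d2 n ω - Ed2) - ((mm d n ω) ^ 2 - Ed ^ 2) with ht3
    have hEq : mm g2 n ω + 2 * θ * mm gd n ω + θ ^ 2 * mm d2 n ω
          - (mm g n ω + θ * mm d n ω) ^ 2
        - (Eg2 + 2 * θ * Egd + θ ^ 2 * Ed2 - (Eg + θ * Ed) ^ 2)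
        = t1 + θ * t2 + θ ^ 2 * t3 := by
      rw [ht1, ht2, ht3]; ring
    have hYeq : Y n ω = |t1| + |t2| + |t3| := rfl
    rw [hEq, hYeq]
    have habs : |t1 + θ * t2 + θ ^ 2 * t3| ≤ |t1| + |θ * t2| + |θ ^ 2 * t3| :=
      (abs_add_le _ _).trans (add_le_add_left (abs_add_le _ _) _)
    have hθ2 : |θ ^ 2| ≤ 1 := by
      rw [abs_pow]
      exact pow_le_one₀ (abs_nonneg θ) hθabs
    have m2 : |θ * t2| ≤ |t2| :=
      calc |θ * t2| = |θ| * |t2| := abs_mul _ _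
        _ ≤ 1 * |t2| := mul_le_mul_of_nonneg_right hθabs (abs_nonneg _)
        _ = |t2| := one_mul _
    have m3 : |θ ^ 2 * t3| ≤ |t3| :=
      calc |θ ^ 2 * t3| = |θ ^ 2| * |t3| := abs_mul _ _
        _ ≤ 1 * |t3| := mul_le_mul_of_nonneg_right hθ2 (abs_nonneg _)
        _ = |t3| := one_mul _
    exact habs.trans (add_le_add (add_le_add le_rfl m2) m3)
  -- SLLN for the five functionals
  have hslln := fun (φ : ℝ × ℝ → ℝ) (hφ : Measurable φ) (C : ℝ) hC =>
    aux_slln P (fun i ω => (A i ω, S i ω)) hZmeas hIndep hIdent φ hφ C hC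
  have h1 := hslln g hgm B (hbd.mono fun ω h => h.1)
  have h2 := hslln d hdm B (hbd.mono fun ω h => h.2)
  have h3 := hslln g2 hg2m (B^2) hbd_g2
  have h4 := hslln gd hgdm (B^2) hbd_gd
  have h5 := hslln d2 hd2m (B^2) hbd_d2
  -- Y tends to 0 a.e.
  have hY0 : ∀ᵐ ω ∂P, Tendsto (fun n => Y n ω) atTop (𝓝 ((fun _ : Ω => (0:ℝ)) ω)) := by
    filter_upwards [h1, h2, h3, h4, h5] with ω hg' hd' hg2' hgd' hd2'
    have T : Tendsto (fun n => Y n ω) atTop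
        (𝓝 (|(Eg2 - Eg2) - (Eg ^ 2 - Eg ^ 2)|
          + |2 * ((Egd - Egd) - (Eg * Ed - Eg * Ed))|
          + |(Ed2 - Ed2) - (Ed ^ 2 - Ed ^ 2)|)) := by
      refine Tendsto.add (Tendsto.add ?_ ?_) ?_
      · exact (((hg2'.sub tendsto_const_nhds).sub
          ((hg'.pow 2).sub tendsto_const_nhds)).abs)
      · exact ((((hgd'.sub tendsto_const_nhds).sub
          ((hg'.mul hd').sub tendsto_const_nhds)).const_mul 2).abs)
      · exact (((hd2'.sub tendsto_const_nhds).sub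
          ((hd'.pow 2).sub tendsto_const_nhds)).abs)
    simpa using T
  -- measurability of Y n
  have hmm_meas : ∀ (φ : ℝ × ℝ → ℝ), Measurable φ → ∀ n, Measurable (mm φ n) := by
    intro φ hφ n
    exact (Finset.measurable_sum _ fun i _ => hφ.comp (hZmeas i)).const_mul _
  have hYmeas : ∀ n, Measurable (Y n) := by
    intro n
    apply Measurable.add
    apply Measurable.add
    · exact (((hmm_meas g2 hg2m n).sub measurable_const).sub
        (((hmm_meas g hgm n).pow measurable_const).sub measurable_const)).abs
    · exact ((((hmm_meas gd hgdm n).sub measurable_const).sub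
        (((hmm_meas g hgm n).mul (hmm_meas d hdm n)).sub measurable_const)).const_mul 2).abs
    · exact (((hmm_meas d2 hd2m n).sub measurable_const).sub
        (((hmm_meas d hdm n).pow measurable_const).sub measurable_const)).abs
  -- convergence in measure of Y to 0
  have hTIM := tendstoInMeasure_of_tendsto_ae (μ := P)
    (f := Y) (g := fun _ => (0:ℝ))
    (fun n => (hYmeas n).aestronglyMeasurable) hY0
  have hTIMε := tendstoInMeasure_iff_dist.1 hTIM ε hε
  -- squeeze
  refine tendsto_of_tendsto_of_tendsto_of_le_of_le' tendsto_const_nhds hTIMε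
    (Eventually.of_forall fun n => zero_le) ?_
  filter_upwards [eventually_ge_atTop 1] with n hn
  apply measure_mono
  intro ω hω
  simp only [Set.mem_setOf_eq] at hω ⊢
  have hsup : (⨆ θ : Set.Icc (0:ℝ) 1,
      |sampleVar n (fun i => subjReward astar θ (A i ω) (S i ω)) -
        variance (fun ω' => subjReward astar θ (A 0 ω') (S 0 ω')) P|) ≤ Y n ω :=
    ciSup_le fun θ => key n hn ω θ.1 θ.2.1 θ.2.2
  have : ε < Y n ω := lt_of_lt_of_le hω hsup
  rw [Real.dist_eq, sub_zero]
  exact le_trans this.le (le_abs_self _)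
end
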